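/- Let Φ₁ and Φ₂ be independent point processes with σ-finite moment measures, and let f, g : 𝕏 → ℝ≥0 be measurable with g integrable with respect to M_{Φ₁} + M_{Φ₂}. Then ∂/∂t E[exp(−(Φ₁+Φ₂)(f+tg))]|_{t=0} = − E[Φ₁(g) e^{−Φ₁(f)}] E[e^{−Φ₂(f)}] − E[Φ₂(g) e^{−Φ₂(f)}] E[e^{−Φ₁(f)}]. -/

import Mathlib

open MeasureTheory ProbabilityTheory ENNReal Set Filter

/-- `negExp a = e^{-a}`, with the convention `e^{-∞} = 0`. -/
noncomputable def negExp (a : ℝ≥0∞) : ℝ≥0∞ :=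
  if a = ∞ then 0 else ENNReal.ofReal (Real.exp (-a.toReal))

lemma negExp_ne_top (a : ℝ≥0∞) : negExp a ≠ ∞ := by
  unfold negExp; split <;> simp

lemma negExp_le_one (a : ℝ≥0∞) : negExp a ≤ 1 := by
  unfold negExp; split
  · simp
  · rw [← ENNReal.ofReal_one]
    exact ENNReal.ofReal_le_ofReal (Real.exp_le_one_iff.2 (neg_nonpos.2 ENNReal.toReal_nonneg))

lemma measurable_negExp : Measurable negExp := by
  unfold negExp
  exact Measurable.ite (measurableSet_singleton ∞) measurable_const
    (ENNReal.measurable_ofReal.comp (Real.measurable_exp.comp ENNReal.measurable_toReal.neg))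

lemma negExp_add (a b : ℝ≥0∞) : negExp (a + b) = negExp a * negExp b := by
  unfold negExp
  rcases eq_or_ne a ∞ with ha | ha
  · simp [ha]
  rcases eq_or_ne b ∞ with hb | hb
  · simp [hb]
  rw [if_neg (by simp [ha, hb]), if_neg ha, if_neg hb, ENNReal.toReal_add ha hb, neg_add,
    Real.exp_add, ENNReal.ofReal_mul (Real.exp_nonneg _)]

lemma negExp_toReal (a : ℝ≥0∞) (ha : a ≠ ∞) : (negExp a).toReal = Real.exp (-a.toReal) := by
  rw [negExp, if_neg ha, ENNReal.toReal_ofReal (Real.exp_nonneg _)]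

lemma negExp_top : negExp ∞ = 0 := by simp [negExp]

lemma laplace_core_deriv {Ω : Type*} [MeasurableSpace Ω] (P : Measure Ω)
    [IsProbabilityMeasure P] (A G : Ω → ℝ≥0∞) (hA : Measurable A) (hG : Measurable G)
    (hGint : ∫⁻ ω, G ω ∂P ≠ ∞) :
    HasDerivWithinAt
      (fun t : ℝ => (∫⁻ ω, negExp (A ω + ENNReal.ofReal t * G ω) ∂P).toReal)
      (-(∫⁻ ω, G ω * negExp (A ω) ∂P).toReal) (Set.Ici 0) 0 := by
  set H : ℝ → Ω → ℝ := fun t ω => (negExp (A ω + ENNReal.ofReal t * G ω)).toReal with hH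
  have hGfin : ∀ᵐ ω ∂P, G ω < ∞ := ae_lt_top hG hGint
  have measH : ∀ t, Measurable (H t) := fun t =>
    (measurable_negExp.comp (hA.add (measurable_const.mul hG))).ennreal_toReal
  have Hle : ∀ t ω, H t ω ≤ 1 := fun t ω => by
    simpa using ENNReal.toReal_mono one_ne_top (negExp_le_one _)
  have Hnonneg : ∀ t ω, 0 ≤ H t ω := fun t ω => ENNReal.toReal_nonneg
  have intH : ∀ t, Integrable (H t) P := fun t =>
    (integrable_const (1 : ℝ)).mono' (measH t).aestronglyMeasurable
      (Filter.Eventually.of_forall fun ω => by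
        rw [Real.norm_eq_abs, abs_of_nonneg (Hnonneg t ω)]; exact Hle t ω)
  have hF : ∀ t : ℝ, (∫⁻ ω, negExp (A ω + ENNReal.ofReal t * G ω) ∂P).toReal
      = ∫ ω, H t ω ∂P := fun t =>
    (integral_toReal ((measurable_negExp.comp (hA.add (measurable_const.mul hG)))).aemeasurable
      (Filter.Eventually.of_forall fun ω => (negExp_ne_top _).lt_top)).symm
  -- the target derivative as an integral
  have hDval : -(∫⁻ ω, G ω * negExp (A ω) ∂P).toReal
      = ∫ ω, -(G ω * negExp (A ω)).toReal ∂P := by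
    have h0 : ∫ ω, (G ω * negExp (A ω)).toReal ∂P
        = (∫⁻ ω, G ω * negExp (A ω) ∂P).toReal := by
      apply integral_toReal (hG.mul (measurable_negExp.comp hA)).aemeasurable
      filter_upwards [hGfin] with ω hω
      exact ENNReal.mul_lt_top hω (lt_top_iff_ne_top.2 (negExp_ne_top _))
    rw [integral_neg, h0]
  rw [hasDerivWithinAt_iff_tendsto_slope]
  have hset : Set.Ici (0:ℝ) \ {0} = Set.Ioi 0 := Set.Ici_sdiff_left
  rw [hset]
  -- dominated convergence
  have key : Tendsto (fun t : ℝ => ∫ ω, (H t ω - H 0 ω) / t ∂P) (nhdsWithin 0 (Set.Ioi 0))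
      (nhds (∫ ω, -(G ω * negExp (A ω)).toReal ∂P)) := by
    apply tendsto_integral_filter_of_dominated_convergence (fun ω => (G ω).toReal)
    · exact Filter.Eventually.of_forall fun t =>
        (((measH t).sub (measH 0)).div_const t).aestronglyMeasurable
    · filter_upwards [self_mem_nhdsWithin] with t (ht : t ∈ Set.Ioi 0)
      filter_upwards [hGfin] with ω hω
      rcases eq_or_ne (A ω) ∞ with hAω | hAω
      · have : ∀ s : ℝ, H s ω = 0 := by
          intro s; simp [hH, hAω, top_add, negExp_top]
        simp [this, ENNReal.toReal_nonneg]
      · set a := (A ω).toReal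
        set gr := (G ω).toReal
        have hgr : 0 ≤ gr := ENNReal.toReal_nonneg
        have ht' : (0:ℝ) < t := ht
        have hHs : ∀ s : ℝ, 0 ≤ s → H s ω = Real.exp (-(a + s * gr)) := by
          intro s hs
          have h1 : ENNReal.ofReal s * G ω ≠ ∞ := ENNReal.mul_ne_top ofReal_ne_top hω.ne
          rw [hH]
          simp only
          rw [negExp_toReal _ (by simp [hAω, h1]), ENNReal.toReal_add hAω h1,
            ENNReal.toReal_mul, ENNReal.toReal_ofReal hs]
        rw [hHs t ht'.le, hHs 0 le_rfl]
        have hmono : Real.exp (-(a + t * gr)) ≤ Real.exp (-(a + 0 * gr)) := by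
          apply Real.exp_le_exp.2; nlinarith
        rw [Real.norm_eq_abs, abs_div, abs_of_pos ht', abs_of_nonpos (by linarith),
          div_le_iff₀ ht']
        have h2 : 1 - t * gr ≤ Real.exp (-(t * gr)) := by
          have := Real.add_one_le_exp (-(t * gr)); linarith
        have h3 : Real.exp (-(a + t * gr)) = Real.exp (-a) * Real.exp (-(t * gr)) := by
          rw [← Real.exp_add]; ring_nf
        have h4 : Real.exp (-a) ≤ 1 := Real.exp_le_one_iff.2 (by
          simp [a, ENNReal.toReal_nonneg])
        have h7 : Real.exp (-(a + 0 * gr)) = Real.exp (-a) := by norm_num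
        have h8 : Real.exp (-(t * gr)) ≤ 1 :=
          Real.exp_le_one_iff.2 (by nlinarith)
        have h9 : Real.exp (-a) * (1 - Real.exp (-(t * gr))) ≤ 1 * (t * gr) :=
          mul_le_mul h4 (by linarith) (by linarith) zero_le_one
        nlinarith
    · exact integrable_toReal_of_lintegral_ne_top hG.aemeasurable hGint
    · filter_upwards [hGfin] with ω hω
      rcases eq_or_ne (A ω) ∞ with hAω | hAω
      · have hz : ∀ s : ℝ, H s ω = 0 := by
          intro s; simp [hH, hAω, top_add, negExp_top]
        have : (fun t : ℝ => (H t ω - H 0 ω) / t) = fun _ => 0 := by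
          funext t; simp [hz]
        rw [this, hAω, negExp_top, mul_zero]
        simpa using tendsto_const_nhds
      · set a := (A ω).toReal
        set gr := (G ω).toReal
        have hHs : ∀ s : ℝ, 0 ≤ s → H s ω = Real.exp (-(a + s * gr)) := by
          intro s hs
          have h1 : ENNReal.ofReal s * G ω ≠ ∞ := ENNReal.mul_ne_top ofReal_ne_top hω.ne
          rw [hH]
          simp only
          rw [negExp_toReal _ (by simp [hAω, h1]), ENNReal.toReal_add hAω h1,
            ENNReal.toReal_mul, ENNReal.toReal_ofReal hs]
        have h1 : HasDerivAt (fun s : ℝ => -(a + s * gr)) (-gr) 0 := by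
          exact (((hasDerivAt_id (0:ℝ)).mul_const gr).const_add a).neg.congr_deriv (by simp)
        have hd : HasDerivAt (fun s : ℝ => Real.exp (-(a + s * gr)))
            (Real.exp (-(a + 0 * gr)) * (-gr)) 0 := h1.exp
        have hval : Real.exp (-(a + 0 * gr)) * (-gr) = -(G ω * negExp (A ω)).toReal := by
          rw [ENNReal.toReal_mul, negExp_toReal _ hAω]
          ring_nf
          rfl
        have hts : Tendsto (slope (fun s : ℝ => Real.exp (-(a + s * gr))) 0)
            (nhdsWithin 0 {(0:ℝ)}ᶜ) (nhds (Real.exp (-(a + 0 * gr)) * (-gr))) :=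
          hasDerivAt_iff_tendsto_slope.1 hd
        rw [hval] at hts
        have hts' := hts.mono_left (nhdsWithin_mono 0 (fun x (hx : x ∈ Set.Ioi 0) => ne_of_gt hx))
        apply hts'.congr'
        filter_upwards [self_mem_nhdsWithin] with t (ht : t ∈ Set.Ioi 0)
        rw [slope_def_field, sub_zero, hHs t (le_of_lt ht), hHs 0 le_rfl]
  rw [hDval]
  apply key.congr'
  filter_upwards [self_mem_nhdsWithin] with t (ht : t ∈ Set.Ioi 0)
  have ht' : (0:ℝ) < t := ht
  rw [slope_def_field, hF, hF, sub_zero]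
  rw [← integral_sub (intH t) (intH 0), ← integral_div]

/-- For independent point processes `Φ₁, Φ₂`,
`∂/∂t E[exp(−(Φ₁+Φ₂)(f+tg))]|_{t=0}
  = −E[Φ₁(g) e^{−Φ₁(f)}] E[e^{−Φ₂(f)}] − E[Φ₂(g) e^{−Φ₂(f)}] E[e^{−Φ₁(f)}]`
(one-sided derivative at `t = 0`). -/
theorem laplace_deriv_superposition
    {Ω 𝕏 : Type*} [MeasurableSpace Ω] [MetricSpace 𝕏] [CompleteSpace 𝕏]
    [TopologicalSpace.SeparableSpace 𝕏] [MeasurableSpace 𝕏] [BorelSpace 𝕏]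
    (P : Measure Ω) [IsProbabilityMeasure P]
    (Φ₁ Φ₂ : Ω → Measure 𝕏) (hΦ₁ : Measurable Φ₁) (hΦ₂ : Measurable Φ₂)
    (hindep : IndepFun Φ₁ Φ₂ P)
    (M₁ M₂ : Measure 𝕏) [SigmaFinite M₁] [SigmaFinite M₂]
    (hM₁ : ∀ B, MeasurableSet B → M₁ B = ∫⁻ ω, Φ₁ ω B ∂P)
    (hM₂ : ∀ B, MeasurableSet B → M₂ B = ∫⁻ ω, Φ₂ ω B ∂P)
    (f g : 𝕏 → ℝ≥0∞) (hf : Measurable f) (hg : Measurable g)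
    (hgint : ∫⁻ x, g x ∂(M₁ + M₂) ≠ ∞) :
    HasDerivWithinAt
      (fun t : ℝ =>
        (∫⁻ ω, negExp (∫⁻ x, (f x + ENNReal.ofReal t * g x) ∂(Φ₁ ω + Φ₂ ω)) ∂P).toReal)
      (-((∫⁻ ω, (∫⁻ x, g x ∂(Φ₁ ω)) * negExp (∫⁻ x, f x ∂(Φ₁ ω)) ∂P)
            * (∫⁻ ω, negExp (∫⁻ x, f x ∂(Φ₂ ω)) ∂P)
          + (∫⁻ ω, (∫⁻ x, g x ∂(Φ₂ ω)) * negExp (∫⁻ x, f x ∂(Φ₂ ω)) ∂P)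
            * (∫⁻ ω, negExp (∫⁻ x, f x ∂(Φ₁ ω)) ∂P)).toReal)
      (Set.Ici (0 : ℝ)) 0 := by
  set A₁ : Ω → ℝ≥0∞ := fun ω => ∫⁻ x, f x ∂(Φ₁ ω) with hA₁
  set A₂ : Ω → ℝ≥0∞ := fun ω => ∫⁻ x, f x ∂(Φ₂ ω) with hA₂
  set G₁ : Ω → ℝ≥0∞ := fun ω => ∫⁻ x, g x ∂(Φ₁ ω) with hG₁
  set G₂ : Ω → ℝ≥0∞ := fun ω => ∫⁻ x, g x ∂(Φ₂ ω) with hG₂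
  have mA₁ : Measurable A₁ := (Measure.measurable_lintegral hf).comp hΦ₁
  have mA₂ : Measurable A₂ := (Measure.measurable_lintegral hf).comp hΦ₂
  have mG₁ : Measurable G₁ := (Measure.measurable_lintegral hg).comp hΦ₁
  have mG₂ : Measurable G₂ := (Measure.measurable_lintegral hg).comp hΦ₂
  -- identify the first moment measures
  have hbind1 : P.bind Φ₁ = M₁ := by
    ext s hs
    rw [Measure.bind_apply hs hΦ₁.aemeasurable, hM₁ s hs]
  have hbind2 : P.bind Φ₂ = M₂ := by
    ext s hs
    rw [Measure.bind_apply hs hΦ₂.aemeasurable, hM₂ s hs]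
  have hI1 : ∫⁻ ω, G₁ ω ∂P = ∫⁻ x, g x ∂M₁ := by
    rw [← hbind1, Measure.lintegral_bind hΦ₁.aemeasurable hg.aemeasurable]
  have hI2 : ∫⁻ ω, G₂ ω ∂P = ∫⁻ x, g x ∂M₂ := by
    rw [← hbind2, Measure.lintegral_bind hΦ₂.aemeasurable hg.aemeasurable]
  have hGint : ∫⁻ ω, (G₁ ω + G₂ ω) ∂P ≠ ∞ := by
    rw [lintegral_add_left mG₁, hI1, hI2, ← lintegral_add_measure]
    exact hgint
  -- the core derivative statement
  have core := laplace_core_deriv P (fun ω => A₁ ω + A₂ ω) (fun ω => G₁ ω + G₂ ω)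
    (mA₁.add mA₂) (mG₁.add mG₂) hGint
  -- rewrite the function
  have hfun : (fun t : ℝ =>
        (∫⁻ ω, negExp (∫⁻ x, (f x + ENNReal.ofReal t * g x) ∂(Φ₁ ω + Φ₂ ω)) ∂P).toReal)
      = fun t : ℝ =>
        (∫⁻ ω, negExp ((A₁ ω + A₂ ω) + ENNReal.ofReal t * (G₁ ω + G₂ ω)) ∂P).toReal := by
    funext t
    congr 1
    apply lintegral_congr
    intro ω
    congr 1
    rw [lintegral_add_measure, lintegral_add_left hf, lintegral_add_left hf,
      lintegral_const_mul _ hg, lintegral_const_mul _ hg, mul_add]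
    ring
  -- identify the derivative value via independence
  have hval : ∫⁻ ω, (G₁ ω + G₂ ω) * negExp (A₁ ω + A₂ ω) ∂P
      = (∫⁻ ω, G₁ ω * negExp (A₁ ω) ∂P) * (∫⁻ ω, negExp (A₂ ω) ∂P)
        + (∫⁻ ω, G₂ ω * negExp (A₂ ω) ∂P) * (∫⁻ ω, negExp (A₁ ω) ∂P) := by
    have mne : Measurable (fun μ : Measure 𝕏 => negExp (∫⁻ x, f x ∂μ)) :=
      measurable_negExp.comp (Measure.measurable_lintegral hf)
    have mgne : Measurable (fun μ : Measure 𝕏 => (∫⁻ x, g x ∂μ) * negExp (∫⁻ x, f x ∂μ)) :=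
      (Measure.measurable_lintegral hg).mul mne
    have i1 : IndepFun (fun ω => G₁ ω * negExp (A₁ ω)) (fun ω => negExp (A₂ ω)) P :=
      hindep.comp mgne mne
    have i2 : IndepFun (fun ω => G₂ ω * negExp (A₂ ω)) (fun ω => negExp (A₁ ω)) P :=
      hindep.symm.comp mgne mne
    have e1 := lintegral_mul_eq_lintegral_mul_lintegral_of_indepFun
      ((mG₁.mul (measurable_negExp.comp mA₁))) (measurable_negExp.comp mA₂) i1
    have e2 := lintegral_mul_eq_lintegral_mul_lintegral_of_indepFun
      ((mG₂.mul (measurable_negExp.comp mA₂))) (measurable_negExp.comp mA₁) i2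
    simp only [Pi.mul_apply, Function.comp] at e1 e2
    calc ∫⁻ ω, (G₁ ω + G₂ ω) * negExp (A₁ ω + A₂ ω) ∂P
        = ∫⁻ ω, (G₁ ω * negExp (A₁ ω)) * negExp (A₂ ω)
            + (G₂ ω * negExp (A₂ ω)) * negExp (A₁ ω) ∂P := by
          apply lintegral_congr
          intro ω
          rw [negExp_add]
          ring
      _ = (∫⁻ ω, (G₁ ω * negExp (A₁ ω)) * negExp (A₂ ω) ∂P)
            + ∫⁻ ω, (G₂ ω * negExp (A₂ ω)) * negExp (A₁ ω) ∂P := by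
          exact lintegral_add_left ((mG₁.mul (measurable_negExp.comp mA₁)).mul
            (measurable_negExp.comp mA₂)) _
      _ = _ := by rw [e1, e2]
  rw [hfun]
  have hval2 : -((∫⁻ ω, G₁ ω * negExp (A₁ ω) ∂P) * (∫⁻ ω, negExp (A₂ ω) ∂P)
        + (∫⁻ ω, G₂ ω * negExp (A₂ ω) ∂P) * (∫⁻ ω, negExp (A₁ ω) ∂P)).toReal
      = -(∫⁻ ω, (G₁ ω + G₂ ω) * negExp (A₁ ω + A₂ ω) ∂P).toReal := by
    rw [hval]
  exact hval2 ▸ core
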